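/- Let A, B be n×n and n×m real matrices. If rank(B, AB, …, A^{n−1}B) = n, then for every λ ∈ ℂ the matrix (A − λI, B), viewed as an n×(n+m) complex matrix, has rank n (Hautus condition). -/

import Mathlib

open Matrix Complex

/-- Kalman controllability implies the Hautus condition: for every `λ ∈ ℂ`,
the matrix `(A - λI, B)` has full row rank `n`. -/
theorem kalman_implies_hautus (n m : ℕ)
    (A : Matrix (Fin n) (Fin n) ℝ) (B : Matrix (Fin n) (Fin m) ℝ)
    (hctrb : (Matrix.of fun (i : Fin n) (p : Fin n × Fin m) =>
        (A ^ (p.1 : ℕ) * B) i p.2).rank = n) :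
    ∀ lam : ℂ,
      (Matrix.fromCols
        (A.map (Complex.ofReal) - lam • (1 : Matrix (Fin n) (Fin n) ℂ))
        (B.map (Complex.ofReal))).rank = n := by
  intro lam
  set K : Matrix (Fin n) (Fin n × Fin m) ℝ :=
    Matrix.of fun (i : Fin n) (p : Fin n × Fin m) => (A ^ (p.1 : ℕ) * B) i p.2 with hKdef
  -- rows of K are linearly independent
  have hK : LinearIndependent ℝ K.row := by
    rw [linearIndependent_iff_card_eq_finrank_span]
    rw [Fintype.card_fin, Set.finrank, ← Matrix.rank_eq_finrank_span_row, hctrb]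
  have hK' := Fintype.linearIndependent_iff.mp hK
  set a : Matrix (Fin n) (Fin n) ℂ := A.map Complex.ofReal with ha
  set b : Matrix (Fin n) (Fin m) ℂ := B.map Complex.ofReal with hb
  set M : Matrix (Fin n) (Fin n ⊕ Fin m) ℂ := Matrix.fromCols (a - lam • 1) b with hM
  have hMind : LinearIndependent ℂ M.row := by
    rw [Fintype.linearIndependent_iff]
    intro c hc
    -- translate to vecMul
    have hvm : c ᵥ* M = 0 := by
      funext j
      have := congrFun hc j
      simpa [Matrix.vecMul, dotProduct, Finset.sum_apply] using this
    rw [hM, Matrix.vecMul_fromCols] at hvm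
    have h1 : c ᵥ* (a - lam • 1) = 0 := by
      funext j; exact congrFun hvm (Sum.inl j)
    have h2 : c ᵥ* b = 0 := by
      funext j; exact congrFun hvm (Sum.inr j)
    have heig : c ᵥ* a = lam • c := by
      have := sub_eq_zero.mp ((Matrix.vecMul_sub a (lam • 1) c).symm.trans h1)
      rw [this]
      funext j
      simp [Matrix.vecMul, dotProduct, Matrix.one_apply, mul_comm]
    have hpow : ∀ k : ℕ, c ᵥ* (a ^ k) = (lam ^ k) • c := by
      intro k
      induction k with
      | zero => simp [Matrix.vecMul_one]
      | succ k ih =>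
        rw [pow_succ, ← Matrix.vecMul_vecMul, ih, Matrix.smul_vecMul, heig, smul_smul, pow_succ]
    have hkb : ∀ k : ℕ, c ᵥ* ((A ^ k * B).map Complex.ofReal) = 0 := by
      intro k
      have hpa : ∀ k : ℕ, a ^ k = (A ^ k).map Complex.ofReal := by
        intro k
        induction k with
        | zero =>
          ext i j
          simp [Matrix.one_apply, Matrix.map_apply, apply_ite Complex.ofReal]
        | succ k ih =>
          ext i j
          rw [pow_succ, ih]
          simp [pow_succ, ih, Matrix.mul_apply, Matrix.map_apply, ha]
      have hmap : (A ^ k * B).map (Complex.ofReal) = a ^ k * b := by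
        rw [hpa, hb]
        ext i j
        simp [Matrix.mul_apply, Matrix.map_apply]
      rw [hmap, ← Matrix.vecMul_vecMul, hpow, Matrix.smul_vecMul, h2, smul_zero]
    -- split into real and imaginary parts
    have hre : ∀ i, (c i).re = 0 := by
      apply hK'
      funext p
      have := congrFun (hkb p.1) p.2
      have h0 : (∑ i, c i * Complex.ofReal ((A ^ (p.1 : ℕ) * B) i p.2)) = 0 := by
        simpa [Matrix.vecMul, dotProduct, Matrix.map_apply] using this
      have := congrArg Complex.re h0
      simpa [Complex.re_sum, Finset.sum_apply, hKdef] using this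
    have him : ∀ i, (c i).im = 0 := by
      apply hK'
      funext p
      have := congrFun (hkb p.1) p.2
      have h0 : (∑ i, c i * Complex.ofReal ((A ^ (p.1 : ℕ) * B) i p.2)) = 0 := by
        simpa [Matrix.vecMul, dotProduct, Matrix.map_apply] using this
      have := congrArg Complex.im h0
      simpa [Complex.im_sum, Finset.sum_apply, hKdef] using this
    intro i
    exact Complex.ext (hre i) (him i)
  have := hMind.rank_matrix
  simpa [Fintype.card_fin] using this
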